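/- The negative modal language L⁻_{□,◇,∧,∨} is finitely characterizable: for every finite set Prop of propositional variables, every formula φ ∈ L⁻_{□,◇,∧,∨}[Prop] has a finite characterization with respect to L⁻_{□,◇,∧,∨}[Prop]. -/
import Mathlib


/-- Modal formulas in negation normal form over propositional variables indexed by `ℕ`.
`var p` is the propositional variable `p`; `nvar p` is the negated literal `¬ p`. -/
inductive MF : Type
  | var  : ℕ → MF
  | nvar : ℕ → MF
  | top  : MF
  | bot  : MF
  | and  : MF → MF → MF
  | or   : MF → MF → MF
  | dia  : MF → MF
  | box  : MF → MF

/-- Labels for the connectives `∧, ∨, ◇, □, ⊤, ⊥`. -/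
inductive Conn : Type
  | conj | disj | dia | box | top | bot

/-- The set of connectives occurring in a modal formula. -/
def MF.conns : MF → Set Conn
  | .var _ => ∅
  | .nvar _ => ∅
  | .top => {Conn.top}
  | .bot => {Conn.bot}
  | .and φ ψ => φ.conns ∪ ψ.conns ∪ {Conn.conj}
  | .or φ ψ => φ.conns ∪ ψ.conns ∪ {Conn.disj}
  | .dia φ => φ.conns ∪ {Conn.dia}
  | .box φ => φ.conns ∪ {Conn.box}

/-- The set of propositional variables occurring positively (unnegated) in a formula. -/
def MF.pvars : MF → Set ℕ
  | .var p => {p}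
  | .nvar _ => ∅
  | .top => ∅
  | .bot => ∅
  | .and φ ψ => φ.pvars ∪ ψ.pvars
  | .or φ ψ => φ.pvars ∪ ψ.pvars
  | .dia φ => φ.pvars
  | .box φ => φ.pvars

/-- The set of propositional variables occurring negatively (negated) in a formula. -/
def MF.nvars : MF → Set ℕ
  | .var _ => ∅
  | .nvar p => {p}
  | .top => ∅
  | .bot => ∅
  | .and φ ψ => φ.nvars ∪ ψ.nvars
  | .or φ ψ => φ.nvars ∪ ψ.nvars
  | .dia φ => φ.nvars
  | .box φ => φ.nvars

/-- The set of propositional variables occurring in a formula. -/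
def MF.vars (φ : MF) : Set ℕ := φ.pvars ∪ φ.nvars

/-- `φ ∈ L_C[P]`: the formula `φ` (in negation normal form, built from literals) uses only
connectives from `C` and variables from `P`. -/
def inLang (C : Set Conn) (P : Set ℕ) (φ : MF) : Prop := φ.conns ⊆ C ∧ φ.vars ⊆ P

/-- A formula is positive if no propositional variable occurs negated in it. -/
def Positive (φ : MF) : Prop := φ.nvars = ∅

/-- A formula is negative if every propositional variable occurs only negated in it. -/
def Negative (φ : MF) : Prop := φ.pvars = ∅

/-- `φ ∈ L⁺_C[P]`: positive fragment. -/
def inPosLang (C : Set Conn) (P : Set ℕ) (φ : MF) : Prop := inLang C P φ ∧ Positive φ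

/-- `φ ∈ L⁻_C[P]`: negative fragment. -/
def inNegLang (C : Set Conn) (P : Set ℕ) (φ : MF) : Prop := inLang C P φ ∧ Negative φ

/-- A Kripke model: a set of worlds, an accessibility relation, and a valuation. -/
structure KModel : Type 1 where
  W : Type
  R : W → W → Prop
  V : ℕ → Set W

/-- A pointed Kripke model. -/
structure PModel : Type 1 where
  M : KModel
  s : M.W

/-- Satisfaction of a modal formula at a world of a Kripke model. -/
def KModel.sat (M : KModel) : M.W → MF → Prop
  | s, .var p => s ∈ M.V p
  | s, .nvar p => s ∉ M.V p
  | _, .top => True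
  | _, .bot => False
  | s, .and φ ψ => M.sat s φ ∧ M.sat s ψ
  | s, .or φ ψ => M.sat s φ ∨ M.sat s ψ
  | s, .dia φ => ∃ t, M.R s t ∧ M.sat t φ
  | s, .box φ => ∀ t, M.R s t → M.sat t φ

/-- Satisfaction in a pointed model. -/
def PModel.sat (e : PModel) (φ : MF) : Prop := e.M.sat e.s φ

/-- A pointed model is finite if its set of worlds is finite. -/
def PModel.finite (e : PModel) : Prop := Finite e.M.W

/-- `φ` fits the pair of example sets `(Epos, Eneg)`. -/
def Fits (φ : MF) (Epos Eneg : Set PModel) : Prop :=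
  (∀ e ∈ Epos, e.sat φ) ∧ (∀ e ∈ Eneg, ¬ e.sat φ)

/-- Semantic equivalence of modal formulas. -/
def EquivF (φ ψ : MF) : Prop := ∀ e : PModel, e.sat φ ↔ e.sat ψ

/-- Semantic entailment of modal formulas. -/
def Entails (φ ψ : MF) : Prop := ∀ e : PModel, e.sat φ → e.sat ψ

/-- `(Epos, Eneg)` is a finite characterization of `φ` with respect to the set `L` of
formulas: both sets are finite, consist of finite pointed models, `φ` fits them, and every
`ψ ∈ L` fitting them is semantically equivalent to `φ`. -/
def FinChar (L : Set MF) (φ : MF) (Epos Eneg : Set PModel) : Prop :=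
  Epos.Finite ∧ Eneg.Finite ∧
  (∀ e ∈ Epos, e.finite) ∧ (∀ e ∈ Eneg, e.finite) ∧
  Fits φ Epos Eneg ∧
  ∀ ψ ∈ L, Fits ψ Epos Eneg → EquivF φ ψ

/-! ### Auxiliary development for the finite characterization theorem -/

/-- Modal depth of a formula. -/
def MF.depth : MF → ℕ
  | .var _ => 0
  | .nvar _ => 0
  | .top => 0
  | .bot => 0
  | .and φ ψ => max φ.depth ψ.depth
  | .or φ ψ => max φ.depth ψ.depth
  | .dia φ => φ.depth + 1
  | .box φ => φ.depth + 1

/-- Depth-`k` profiles (canonical types) over variables in `P`. -/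
def Prof (P : Set ℕ) : ℕ → Type :=
  fun n => Nat.rec (Set ↥P) (fun _ T => Set ↥P × Set T) n

/-- Worlds of the capped model of level `n`: an embedded chain of profile levels
plus a cap world at the bottom. -/
def Wd (P : Set ℕ) : ℕ → Type :=
  fun n => Nat.rec PUnit (fun k W => Prof P k ⊕ W) n

/-- The valuation label at the root of a profile. -/
def lab (P : Set ℕ) : (k : ℕ) → Prof P k → Set ↥P :=
  fun k => match k with
  | 0 => fun A => A
  | _+1 => fun q => q.1

/-- The set of child worlds of a profile (at level 0: the cap). -/
def chS (P : Set ℕ) : (k : ℕ) → Prof P k → Set (Wd P k) :=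
  fun k => match k with
  | 0 => fun _ => Set.univ
  | _+1 => fun q => Sum.inl '' q.2

/-- Accessibility relation on `Wd P n`. -/
def Rd (P : Set ℕ) : (n : ℕ) → Wd P n → Wd P n → Prop :=
  Nat.rec (fun _ _ => True) (fun k ih w w' =>
    match w, w' with
    | Sum.inl q, Sum.inr u => u ∈ chS P k q
    | Sum.inr u, Sum.inr u' => ih u u'
    | _, _ => False)

/-- Valuation on `Wd P n`; the cap world makes every variable true iff `b = false`. -/
def Vd (P : Set ℕ) (b : Bool) : (n : ℕ) → ℕ → Wd P n → Prop :=
  Nat.rec (fun _ _ => b = false) (fun k ih p w =>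
    match w with
    | Sum.inl q => ∃ h : p ∈ P, (⟨p, h⟩ : ↥P) ∈ lab P k q
    | Sum.inr u => ih p u)

/-- The capped Kripke model. -/
def Md (P : Set ℕ) (b : Bool) (n : ℕ) : KModel :=
  ⟨Wd P n, Rd P n, fun p => {w | Vd P b n p w}⟩

/-- The depth-`k` profile of a world of a model. -/
def profOf (P : Set ℕ) : (k : ℕ) → (M : KModel) → M.W → Prof P k :=
  Nat.rec (fun M w => {p : ↥P | w ∈ M.V ↑p})
    (fun _ ih M w => ({p : ↥P | w ∈ M.V ↑p}, {q | ∃ w', M.R w w' ∧ ih M w' = q}))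

/-- The pointed capped model of a profile. -/
def pmOf (P : Set ℕ) (b : Bool) (d : ℕ) (q : Prof P d) : PModel :=
  ⟨Md P b (d+1), (Sum.inl q : Wd P (d+1))⟩

section Lemmas

variable {P : Set ℕ} {b : Bool}

@[simp] lemma Rd_inl_inr {n : ℕ} (q : Prof P n) (u : Wd P n) :
    Rd P (n+1) (Sum.inl q) (Sum.inr u) ↔ u ∈ chS P n q := Iff.rfl

@[simp] lemma Rd_inl_inl {n : ℕ} (q q' : Prof P n) :
    Rd P (n+1) (Sum.inl q) (Sum.inl q') ↔ False := Iff.rfl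

@[simp] lemma Rd_inr_inl {n : ℕ} (u : Wd P n) (q : Prof P n) :
    Rd P (n+1) (Sum.inr u) (Sum.inl q) ↔ False := Iff.rfl

@[simp] lemma Rd_inr_inr {n : ℕ} (u u' : Wd P n) :
    Rd P (n+1) (Sum.inr u) (Sum.inr u') ↔ Rd P n u u' := Iff.rfl

@[simp] lemma Vd_inl {n : ℕ} (p : ℕ) (q : Prof P n) :
    Vd P b (n+1) p (Sum.inl q) ↔ ∃ h : p ∈ P, (⟨p, h⟩ : ↥P) ∈ lab P n q := Iff.rfl

@[simp] lemma Vd_inr {n : ℕ} (p : ℕ) (u : Wd P n) :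
    Vd P b (n+1) p (Sum.inr u) ↔ Vd P b n p u := Iff.rfl

lemma Vd_profOf' : True := trivial

lemma lab_profOf (k : ℕ) (M : KModel) (w : M.W) :
    lab P k (profOf P k M w) = {p : ↥P | w ∈ M.V ↑p} := by
  cases k <;> rfl

lemma Vd_profOf (b : Bool) (k : ℕ) (M : KModel) (w : M.W) (p : ℕ) :
    Vd P b (k+1) p (Sum.inl (profOf P k M w)) ↔ p ∈ P ∧ w ∈ M.V p := by
  rw [Vd_inl, lab_profOf]
  exact ⟨fun ⟨h, hm⟩ => ⟨h, hm⟩, fun ⟨h, hm⟩ => ⟨h, hm⟩⟩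

/-- Satisfaction at an embedded world agrees with satisfaction one level down. -/
lemma sat_inr {n : ℕ} (ψ : MF) (u : Wd P n) :
    (Md P b (n+1)).sat (Sum.inr u) ψ ↔ (Md P b n).sat u ψ := by
  induction ψ generalizing u with
  | var p => exact Iff.rfl
  | nvar p => exact Iff.rfl
  | top => exact Iff.rfl
  | bot => exact Iff.rfl
  | and χ₁ χ₂ ih1 ih2 => exact and_congr (ih1 u) (ih2 u)
  | or χ₁ χ₂ ih1 ih2 => exact or_congr (ih1 u) (ih2 u)
  | dia χ ih =>
    constructor
    · rintro ⟨t, ht, hs⟩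
      rcases t with q | u'
      · exact (ht : False).elim
      · exact ⟨u', ht, (ih u').1 hs⟩
    · rintro ⟨u', ht, hs⟩
      exact ⟨Sum.inr u', ht, (ih u').2 hs⟩
  | box χ ih =>
    constructor
    · intro h u' hu'
      exact (ih u').1 (h (Sum.inr u') hu')
    · intro h t ht
      rcases t with q | u'
      · exact (ht : False).elim
      · exact (ih u').2 (h u' ht)

/-- At level 0 with `b = true` (all variables false, reflexive), every formula in the
fragment is satisfied. -/
lemma sat_cap_true (ψ : MF) (hc : ψ.conns ⊆ {Conn.box, Conn.dia, Conn.conj, Conn.disj})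
    (hp : ψ.pvars = ∅) (u : Wd P 0) : (Md P true 0).sat u ψ := by
  induction ψ generalizing u with
  | var p => simp [MF.pvars] at hp
  | nvar p =>
    intro hmem
    have hb : (true : Bool) = false := hmem
    simp at hb
  | top => trivial
  | bot =>
    exfalso
    have : Conn.bot ∈ ({Conn.box, Conn.dia, Conn.conj, Conn.disj} : Set Conn) :=
      hc (by simp [MF.conns])
    simp at this
  | and χ₁ χ₂ ih1 ih2 =>
    simp only [MF.conns, Set.union_subset_iff] at hc
    simp only [MF.pvars, Set.union_empty_iff] at hp
    exact ⟨ih1 hc.1.1 hp.1 u, ih2 hc.1.2 hp.2 u⟩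
  | or χ₁ χ₂ ih1 ih2 =>
    simp only [MF.conns, Set.union_subset_iff] at hc
    simp only [MF.pvars, Set.union_empty_iff] at hp
    exact Or.inl (ih1 hc.1.1 hp.1 u)
  | dia χ ih =>
    simp only [MF.conns, Set.union_subset_iff] at hc
    exact ⟨u, trivial, ih hc.1 hp u⟩
  | box χ ih =>
    intro t _
    exact ih (by simp only [MF.conns, Set.union_subset_iff] at hc; exact hc.1) hp t

/-- At level 0 with `b = false` (all variables true, reflexive), no formula in the
fragment is satisfied. -/
lemma sat_cap_false (ψ : MF) (hc : ψ.conns ⊆ {Conn.box, Conn.dia, Conn.conj, Conn.disj})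
    (hp : ψ.pvars = ∅) (u : Wd P 0) : ¬ (Md P false 0).sat u ψ := by
  induction ψ generalizing u with
  | var p => simp [MF.pvars] at hp
  | nvar p =>
    intro hmem
    exact hmem rfl
  | top =>
    exfalso
    have : Conn.top ∈ ({Conn.box, Conn.dia, Conn.conj, Conn.disj} : Set Conn) :=
      hc (by simp [MF.conns])
    simp at this
  | bot => exact fun h => h
  | and χ₁ χ₂ ih1 ih2 =>
    simp only [MF.conns, Set.union_subset_iff] at hc
    simp only [MF.pvars, Set.union_empty_iff] at hp
    exact fun h => ih1 hc.1.1 hp.1 u h.1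
  | or χ₁ χ₂ ih1 ih2 =>
    simp only [MF.conns, Set.union_subset_iff] at hc
    simp only [MF.pvars, Set.union_empty_iff] at hp
    rintro (h | h)
    · exact ih1 hc.1.1 hp.1 u h
    · exact ih2 hc.1.2 hp.2 u h
  | dia χ ih =>
    simp only [MF.conns, Set.union_subset_iff] at hc
    rintro ⟨t, _, hs⟩
    exact ih hc.1 hp t hs
  | box χ ih =>
    simp only [MF.conns, Set.union_subset_iff] at hc
    intro h
    exact ih hc.1 hp u (h u trivial)

/-- MAX-side preservation: formulas of the fragment true at `w` remain true at the
capped profile model with `b = true`. -/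
lemma sat_prof_true (ψ : MF) (hc : ψ.conns ⊆ {Conn.box, Conn.dia, Conn.conj, Conn.disj})
    (hp : ψ.pvars = ∅) :
    ∀ (k : ℕ) (M : KModel) (w : M.W), M.sat w ψ →
      (Md P true (k+1)).sat (Sum.inl (profOf P k M w)) ψ := by
  induction ψ with
  | var p => simp [MF.pvars] at hp
  | nvar p =>
    intro k M w h hmem
    exact h ((Vd_profOf true k M w p).1 hmem).2
  | top => intro k M w h; trivial
  | bot => intro k M w h; exact h
  | and χ₁ χ₂ ih1 ih2 =>
    simp only [MF.conns, Set.union_subset_iff] at hc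
    simp only [MF.pvars, Set.union_empty_iff] at hp
    intro k M w h
    exact ⟨ih1 hc.1.1 hp.1 k M w h.1, ih2 hc.1.2 hp.2 k M w h.2⟩
  | or χ₁ χ₂ ih1 ih2 =>
    simp only [MF.conns, Set.union_subset_iff] at hc
    simp only [MF.pvars, Set.union_empty_iff] at hp
    intro k M w h
    rcases h with h | h
    · exact Or.inl (ih1 hc.1.1 hp.1 k M w h)
    · exact Or.inr (ih2 hc.1.2 hp.2 k M w h)
  | dia χ ih =>
    simp only [MF.conns, Set.union_subset_iff] at hc
    rintro k M w ⟨w', hR, hs⟩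
    cases k with
    | zero =>
      refine ⟨Sum.inr PUnit.unit, ?_, ?_⟩
      · exact Set.mem_univ _
      · exact (sat_inr χ _).2 (sat_cap_true χ hc.1 hp _)
    | succ k =>
      refine ⟨Sum.inr (Sum.inl (profOf P k M w')), ?_, ?_⟩
      · exact ⟨profOf P k M w', ⟨w', hR, rfl⟩, rfl⟩
      · exact (sat_inr χ _).2 (ih hc.1 hp k M w' hs)
  | box χ ih =>
    simp only [MF.conns, Set.union_subset_iff] at hc
    intro k M w h
    cases k with
    | zero =>
      rintro (q | u) ht
      · exact (ht : False).elim
      · exact (sat_inr χ _).2 (sat_cap_true χ hc.1 hp _)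
    | succ k =>
      rintro (q | u) ht
      · exact (ht : False).elim
      · obtain ⟨q', hq', rfl⟩ := ht
        obtain ⟨w', hR, rfl⟩ := hq'
        exact (sat_inr χ _).2 (ih hc.1 hp k M w' (h w' hR))

/-- MIN-side preservation: formulas of the fragment true at the capped profile model
with `b = false` were already true at `w`. -/
lemma sat_prof_false (ψ : MF) (hc : ψ.conns ⊆ {Conn.box, Conn.dia, Conn.conj, Conn.disj})
    (hv : ψ.vars ⊆ P) (hp : ψ.pvars = ∅) :
    ∀ (k : ℕ) (M : KModel) (w : M.W),
      (Md P false (k+1)).sat (Sum.inl (profOf P k M w)) ψ → M.sat w ψ := by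
  induction ψ with
  | var p => simp [MF.pvars] at hp
  | nvar p =>
    intro k M w h hmem
    have hP : p ∈ P := hv (by simp [MF.vars, MF.pvars, MF.nvars])
    exact h ((Vd_profOf false k M w p).2 ⟨hP, hmem⟩)
  | top => intro k M w h; trivial
  | bot => intro k M w h; exact h
  | and χ₁ χ₂ ih1 ih2 =>
    simp only [MF.conns, Set.union_subset_iff] at hc
    simp only [MF.vars, MF.pvars, MF.nvars, Set.union_subset_iff] at hv
    simp only [MF.pvars, Set.union_empty_iff] at hp
    intro k M w h
    refine ⟨ih1 hc.1.1 ?_ hp.1 k M w h.1, ih2 hc.1.2 ?_ hp.2 k M w h.2⟩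
    · simp only [MF.vars, Set.union_subset_iff]; exact ⟨hv.1.1, hv.2.1⟩
    · simp only [MF.vars, Set.union_subset_iff]; exact ⟨hv.1.2, hv.2.2⟩
  | or χ₁ χ₂ ih1 ih2 =>
    simp only [MF.conns, Set.union_subset_iff] at hc
    simp only [MF.vars, MF.pvars, MF.nvars, Set.union_subset_iff] at hv
    simp only [MF.pvars, Set.union_empty_iff] at hp
    intro k M w h
    rcases h with h | h
    · refine Or.inl (ih1 hc.1.1 ?_ hp.1 k M w h)
      simp only [MF.vars, Set.union_subset_iff]; exact ⟨hv.1.1, hv.2.1⟩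
    · refine Or.inr (ih2 hc.1.2 ?_ hp.2 k M w h)
      simp only [MF.vars, Set.union_subset_iff]; exact ⟨hv.1.2, hv.2.2⟩
  | dia χ ih =>
    simp only [MF.conns, Set.union_subset_iff] at hc
    have hv' : χ.vars ⊆ P := hv
    rintro k M w ⟨t, ht, hs⟩
    cases k with
    | zero =>
      rcases t with q | u
      · exact (ht : False).elim
      · exact absurd ((sat_inr χ _).1 hs) (sat_cap_false χ hc.1 hp _)
    | succ k =>
      rcases t with q | u
      · exact (ht : False).elim
      · obtain ⟨q', hq', rfl⟩ := ht
        obtain ⟨w', hR, rfl⟩ := hq'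
        exact ⟨w', hR, ih hc.1 hv' hp k M w' ((sat_inr χ _).1 hs)⟩
  | box χ ih =>
    simp only [MF.conns, Set.union_subset_iff] at hc
    have hv' : χ.vars ⊆ P := hv
    intro k M w h
    cases k with
    | zero =>
      exfalso
      have := h (Sum.inr PUnit.unit) (Set.mem_univ _)
      exact sat_cap_false χ hc.1 hp _ ((sat_inr χ _).1 this)
    | succ k =>
      intro w' hR
      have := h (Sum.inr (Sum.inl (profOf P k M w')))
        ⟨profOf P k M w', ⟨w', hR, rfl⟩, rfl⟩
      exact ih hc.1 hv' hp k M w' ((sat_inr χ _).1 this)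

/-- Depth-bounded equivalence: a formula of depth `≤ k` with variables in `P` holds at
`w` iff it holds at the level-`k` capped profile model of `w` (either cap). -/
lemma sat_prof_depth (ψ : MF) (hv : ψ.vars ⊆ P) :
    ∀ (k : ℕ), ψ.depth ≤ k → ∀ (M : KModel) (w : M.W),
      ((Md P b (k+1)).sat (Sum.inl (profOf P k M w)) ψ ↔ M.sat w ψ) := by
  induction ψ with
  | var p =>
    intro k hd M w
    have hP : p ∈ P := hv (by simp [MF.vars, MF.pvars, MF.nvars])
    constructor
    · intro h
      exact ((Vd_profOf b k M w p).1 h).2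
    · intro h
      exact (Vd_profOf b k M w p).2 ⟨hP, h⟩
  | nvar p =>
    intro k hd M w
    have hP : p ∈ P := hv (by simp [MF.vars, MF.pvars, MF.nvars])
    constructor
    · intro h hm
      exact h ((Vd_profOf b k M w p).2 ⟨hP, hm⟩)
    · intro h hm
      exact h ((Vd_profOf b k M w p).1 hm).2
  | top => intro k hd M w; exact Iff.rfl
  | bot => intro k hd M w; exact Iff.rfl
  | and χ₁ χ₂ ih1 ih2 =>
    simp only [MF.vars, MF.pvars, MF.nvars, Set.union_subset_iff] at hv
    intro k hd M w
    simp only [MF.depth, max_le_iff] at hd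
    have h1 := ih1 (by simp only [MF.vars, Set.union_subset_iff]; exact ⟨hv.1.1, hv.2.1⟩) k hd.1 M w
    have h2 := ih2 (by simp only [MF.vars, Set.union_subset_iff]; exact ⟨hv.1.2, hv.2.2⟩) k hd.2 M w
    exact and_congr h1 h2
  | or χ₁ χ₂ ih1 ih2 =>
    simp only [MF.vars, MF.pvars, MF.nvars, Set.union_subset_iff] at hv
    intro k hd M w
    simp only [MF.depth, max_le_iff] at hd
    have h1 := ih1 (by simp only [MF.vars, Set.union_subset_iff]; exact ⟨hv.1.1, hv.2.1⟩) k hd.1 M w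
    have h2 := ih2 (by simp only [MF.vars, Set.union_subset_iff]; exact ⟨hv.1.2, hv.2.2⟩) k hd.2 M w
    exact or_congr h1 h2
  | dia χ ih =>
    have hv' : χ.vars ⊆ P := hv
    intro k hd M w
    cases k with
    | zero => simp [MF.depth] at hd
    | succ k =>
      have hd' : χ.depth ≤ k := by simp only [MF.depth] at hd; omega
      constructor
      · rintro ⟨t, ht, hs⟩
        rcases t with q | u
        · exact (ht : False).elim
        · obtain ⟨q', hq', rfl⟩ := ht
          obtain ⟨w', hR, rfl⟩ := hq'
          exact ⟨w', hR, (ih hv' k hd' M w').1 ((sat_inr χ _).1 hs)⟩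
      · rintro ⟨w', hR, hs⟩
        refine ⟨Sum.inr (Sum.inl (profOf P k M w')), ?_, ?_⟩
        · exact ⟨profOf P k M w', ⟨w', hR, rfl⟩, rfl⟩
        · exact (sat_inr χ _).2 ((ih hv' k hd' M w').2 hs)
  | box χ ih =>
    have hv' : χ.vars ⊆ P := hv
    intro k hd M w
    cases k with
    | zero => simp [MF.depth] at hd
    | succ k =>
      have hd' : χ.depth ≤ k := by simp only [MF.depth] at hd; omega
      constructor
      · intro h w' hR
        have := h (Sum.inr (Sum.inl (profOf P k M w')))
          ⟨profOf P k M w', ⟨w', hR, rfl⟩, rfl⟩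
        exact (ih hv' k hd' M w').1 ((sat_inr χ _).1 this)
      · intro h t ht
        rcases t with q | u
        · exact (ht : False).elim
        · obtain ⟨q', hq', rfl⟩ := ht
          obtain ⟨w', hR, rfl⟩ := hq'
          exact (sat_inr χ _).2 ((ih hv' k hd' M w').2 (h w' hR))

lemma finite_Prof (hfin : P.Finite) : ∀ k, Finite (Prof P k) := by
  haveI := hfin.to_subtype
  intro k
  induction k with
  | zero => exact inferInstanceAs (Finite (Set ↥P))
  | succ k ih => exact inferInstanceAs (Finite (Set ↥P × Set (Prof P k)))

lemma finite_Wd (hfin : P.Finite) : ∀ k, Finite (Wd P k) := by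
  intro k
  induction k with
  | zero => exact inferInstanceAs (Finite PUnit.{1})
  | succ k ih =>
    haveI := finite_Prof hfin k
    haveI := ih
    exact inferInstanceAs (Finite (Prof P k ⊕ Wd P k))

end Lemmas
/-- The negative modal language `L⁻_{□,◇,∧,∨}` is finitely characterizable:
for every finite set `P` of propositional variables, every formula `φ ∈ L⁻_{□,◇,∧,∨}[P]`
has a finite characterization with respect to `L⁻_{□,◇,∧,∨}[P]`. -/

theorem negLang_finitely_characterizable
    (P : Set ℕ) (hfin : P.Finite) (φ : MF)
    (hφ : inNegLang {Conn.box, Conn.dia, Conn.conj, Conn.disj} P φ) :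
    ∃ Epos Eneg : Set PModel,
      FinChar {ψ : MF | inNegLang {Conn.box, Conn.dia, Conn.conj, Conn.disj} P ψ}
        φ Epos Eneg := by
  obtain ⟨⟨hcφ, hvφ⟩, hpφ⟩ := hφ
  set d := φ.depth with hd
  refine ⟨{e | ∃ q : Prof P d, e = pmOf P false d q ∧ e.sat φ},
          {e | ∃ q : Prof P d, e = pmOf P true d q ∧ ¬ e.sat φ}, ?_, ?_, ?_, ?_, ?_, ?_⟩
  · -- Epos finite
    haveI := finite_Prof hfin d
    refine (Set.finite_range (pmOf P false d)).subset ?_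
    rintro e ⟨q, rfl, -⟩
    exact ⟨q, rfl⟩
  · -- Eneg finite
    haveI := finite_Prof hfin d
    refine (Set.finite_range (pmOf P true d)).subset ?_
    rintro e ⟨q, rfl, -⟩
    exact ⟨q, rfl⟩
  · -- finite models
    rintro e ⟨q, rfl, -⟩
    exact finite_Wd hfin (d+1)
  · rintro e ⟨q, rfl, -⟩
    exact finite_Wd hfin (d+1)
  · -- φ fits
    constructor
    · rintro e ⟨q, rfl, hs⟩; exact hs
    · rintro e ⟨q, rfl, hs⟩; exact hs
  · -- every fitting ψ is equivalent
    rintro ψ ⟨⟨hcψ, hvψ⟩, hpψ⟩ ⟨hfitp, hfitn⟩ ⟨M, s⟩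
    constructor
    · intro h
      have h1 : (pmOf P false d (profOf P d M s)).sat φ :=
        (sat_prof_depth φ hvφ d le_rfl M s).2 h
      have h2 : (pmOf P false d (profOf P d M s)).sat ψ :=
        hfitp _ ⟨profOf P d M s, rfl, h1⟩
      exact sat_prof_false ψ hcψ hvψ hpψ d M s h2
    · intro h
      by_contra hnφ
      have h1 : ¬ (pmOf P true d (profOf P d M s)).sat φ :=
        fun hc => hnφ ((sat_prof_depth φ hvφ d le_rfl M s).1 hc)
      have h2 : ¬ (pmOf P true d (profOf P d M s)).sat ψ :=
        hfitn _ ⟨profOf P d M s, rfl, h1⟩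
      exact h2 (sat_prof_true ψ hcψ hpψ d M s h)
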